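/- arXiv:1510.00909 — 3 statements merged into one kernel-verified Lean document; each statement's English description precedes it below -/
import Mathlib

section
/- Every constant C ≥ 1 such that (Σ_{j₁=1}^{n} (Σ_{j₂=1}^{n} |T(e_{j₁}, e_{j₂})|^{4/3})^{(4/3)/(4/3)})^{3/4} ≤ C‖T‖ for all bilinear forms T : ℝⁿ × ℝⁿ → ℝ (with ℓ∞ norms) and all n, satisfies C ≥ 2^{1/2}. In other words, the optimal constant in the real bilinear Bohnenblust–Hille inequality is at least √2. -/
/-- The canonical basis vectors of `ℝⁿ`. -/
def e (n : ℕ) (j : Fin n) : Fin n → ℝ := fun i => if i = j then 1 else 0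

/-- The supremum norm of an `m`-linear form on `(ℓ∞ⁿ)^m`:
`sup{|T(x₁,...,x_m)| : ‖xᵢ‖∞ ≤ 1}`. -/
noncomputable def supNorm (m n : ℕ)
    (T : MultilinearMap ℝ (fun _ : Fin m => (Fin n → ℝ)) ℝ) : ℝ :=
  sSup {v : ℝ | ∃ x : Fin m → Fin n → ℝ, (∀ i, ‖x i‖ ≤ 1) ∧ v = |T x|}

/-- The witness bilinear form `T(x,y) = x₁y₁ + x₁y₂ + x₂y₁ - x₂y₂`. -/
noncomputable def T2 : MultilinearMap ℝ (fun _ : Fin 2 => (Fin 2 → ℝ)) ℝ where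
  toFun x := x 0 0 * x 1 0 + x 0 0 * x 1 1 + x 0 1 * x 1 0 - x 0 1 * x 1 1
  map_update_add' := by
    intro _ x i a b
    fin_cases i <;> simp [Function.update_apply, Fin.ext_iff] <;> ring
  map_update_smul' := by
    intro _ x i c a
    fin_cases i <;> simp [Function.update_apply, Fin.ext_iff] <;> ring

lemma T2_apply (x : Fin 2 → Fin 2 → ℝ) :
    T2 x = x 0 0 * x 1 0 + x 0 0 * x 1 1 + x 0 1 * x 1 0 - x 0 1 * x 1 1 := rfl

lemma supNorm_T2_le : supNorm 2 2 T2 ≤ 2 := by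
  apply Real.sSup_le
  · rintro v ⟨x, hx, rfl⟩
    have hb : ∀ i j : Fin 2, |x i j| ≤ 1 := by
      intro i j
      calc |x i j| = ‖x i j‖ := rfl
        _ ≤ ‖x i‖ := norm_le_pi_norm (x i) j
        _ ≤ 1 := hx i
    have h00 := hb 0 0; have h01 := hb 0 1
    have h10 := hb 1 0; have h11 := hb 1 1
    rw [T2_apply]
    have key : x 0 0 * x 1 0 + x 0 0 * x 1 1 + x 0 1 * x 1 0 - x 0 1 * x 1 1
        = x 0 0 * (x 1 0 + x 1 1) + x 0 1 * (x 1 0 - x 1 1) := by ring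
    rw [key]
    calc |x 0 0 * (x 1 0 + x 1 1) + x 0 1 * (x 1 0 - x 1 1)|
        ≤ |x 0 0 * (x 1 0 + x 1 1)| + |x 0 1 * (x 1 0 - x 1 1)| := abs_add_le _ _
      _ = |x 0 0| * |x 1 0 + x 1 1| + |x 0 1| * |x 1 0 - x 1 1| := by
          rw [abs_mul, abs_mul]
      _ ≤ 1 * |x 1 0 + x 1 1| + 1 * |x 1 0 - x 1 1| := by
          gcongr
      _ = |x 1 0 + x 1 1| + |x 1 0 - x 1 1| := by ring
      _ ≤ 2 := by
          rcases abs_cases (x 1 0 + x 1 1) with ⟨ha, _⟩ | ⟨ha, _⟩ <;>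
          rcases abs_cases (x 1 0 - x 1 1) with ⟨hb', _⟩ | ⟨hb', _⟩ <;>
          rcases abs_cases (x 1 0) with ⟨hc, _⟩ | ⟨hc, _⟩ <;>
          rcases abs_cases (x 1 1) with ⟨hd, _⟩ | ⟨hd, _⟩ <;>
            linarith
  · norm_num

/-- Any constant `C ≥ 1` in the real bilinear Bohnenblust–Hille inequality
(with exponent `4/3`) satisfies `C ≥ 2^{1/2}`. -/
theorem stmt_2 (C : ℝ) (hC1 : 1 ≤ C)
    (hC : ∀ n : ℕ, ∀ T : MultilinearMap ℝ (fun _ : Fin 2 => (Fin n → ℝ)) ℝ,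
      (∑ j₁ : Fin n, ∑ j₂ : Fin n, |T ![e n j₁, e n j₂]| ^ ((4:ℝ)/3)) ^ ((3:ℝ)/4)
        ≤ C * supNorm 2 n T) :
    (2:ℝ) ^ ((1:ℝ)/2) ≤ C := by
  have h := hC 2 T2
  have hsum : (∑ j₁ : Fin 2, ∑ j₂ : Fin 2, |T2 ![e 2 j₁, e 2 j₂]| ^ ((4:ℝ)/3)) = 4 := by
    simp [Fin.sum_univ_two, T2_apply, e]
    norm_num
  rw [hsum] at h
  have h4 : ((4:ℝ)) ^ ((3:ℝ)/4) = (2:ℝ) ^ ((3:ℝ)/2) := by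
    have : (4:ℝ) = (2:ℝ) ^ (2:ℝ) := by
      rw [show (2:ℝ) = ((2:ℕ):ℝ) by norm_num, Real.rpow_natCast]; norm_num
    rw [this, ← Real.rpow_mul (by norm_num : (0:ℝ) ≤ 2)]
    norm_num
  rw [h4] at h
  have h32 : (2:ℝ) ^ ((3:ℝ)/2) = 2 * (2:ℝ) ^ ((1:ℝ)/2) := by
    rw [show (3:ℝ)/2 = 1 + 1/2 by norm_num, Real.rpow_add (by norm_num : (0:ℝ) < 2),
      Real.rpow_one]
  have hsn : supNorm 2 2 T2 ≤ 2 := supNorm_T2_le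
  have hC0 : (0:ℝ) ≤ C := by linarith
  have : C * supNorm 2 2 T2 ≤ C * 2 := by
    exact mul_le_mul_of_nonneg_left hsn hC0
  rw [h32] at h
  linarith
end

section
/- For every m ≥ 2 and every q₁,...,q_m ∈ [1,2] with 1/q₁ + ⋯ + 1/q_m = (m+1)/2, any constant C such that the mixed-norm inequality (Σ_{j₁}(Σ_{j₂}(⋯(Σ_{j_m}|T(e_{j₁},...,e_{j_m})|^{q_m})^{q_{m-1}/q_m}⋯)^{q₂/q₃})^{q₁/q₂})^{1/q₁} ≤ C‖T‖ holds for all real m-linear forms T on (ℓ∞ⁿ)^m and all n, must satisfy C ≥ 2^{((m-1)q̂₁ + Σ_{i=2}^m q̂ᵢ - (m-1)q₁⋯q_m)/(q₁⋯q_m)}, where q̂ᵢ = (q₁⋯q_m)/qᵢ. -/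
/-- The iterated mixed `ℓ_{q₁}(ℓ_{q₂}(⋯ℓ_{q_m}))` norm of an `m`-indexed array
`f` with indices ranging over `{0, ..., N-1}`:
`(Σ_{j₁<N}(⋯(Σ_{j_m<N}|f(j₁,...,j_m)|^{q_m})^{q_{m-1}/q_m}⋯)^{q₁/q₂})^{1/q₁}`. -/
noncomputable def mixedNorm : (m : ℕ) → (N : ℕ) → (ℕ → ℝ) → ((ℕ → ℕ) → ℝ) → ℝ
  | 0, _, _, f => |f fun _ => 0|
  | m + 1, N, q, f =>
      (∑ j : Fin N, (mixedNorm m N (fun i => q (i + 1))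
          (fun idx => f (fun i => if i = 0 then (j : ℕ) else idx (i - 1)))) ^ q 0)
        ^ (1 / q 0)

/-- The `j`-th canonical basis vector of `ℝⁿ` (interpreted as `0` if `j ≥ n`). -/
def eVec (n : ℕ) (j : ℕ) : Fin n → ℝ := fun i => if (i : ℕ) = j then 1 else 0

/-- The shift exponents in the inductive definition of `T_m`. -/
def Tshift (m k : ℕ) : ℕ := if k ≤ 1 then 2 ^ (m - 1) else 2 ^ (m - k)

/-- The inductively defined `m`-linear forms `T_m` of Diniz et al.:
`T₂(x,y) = x₁y₁ + x₁y₂ + x₂y₁ - x₂y₂` and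
`T_{m+1}(x⁽¹⁾,...,x⁽ᵐ⁺¹⁾) = (x₁⁽ᵐ⁺¹⁾+x₂⁽ᵐ⁺¹⁾)T_m(x⁽¹⁾,...,x⁽ᵐ⁾)
  + (x₁⁽ᵐ⁺¹⁾-x₂⁽ᵐ⁺¹⁾)T_m(B^{2^{m-1}}x⁽¹⁾, B^{2^{m-1}}x⁽²⁾, B^{2^{m-2}}x⁽³⁾, ..., B²x⁽ᵐ⁾)`,
where `B` is the backward shift. The `k`-th argument (0-indexed) is `x k : ℕ → ℝ`. -/
noncomputable def Tform : ℕ → (ℕ → ℕ → ℝ) → ℝ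
  | 0, _ => 0
  | 1, x => x 0 0
  | 2, x => x 0 0 * x 1 0 + x 0 0 * x 1 1 + x 0 1 * x 1 0 - x 0 1 * x 1 1
  | m + 3, x =>
      (x (m + 2) 0 + x (m + 2) 1) * Tform (m + 2) x
        + (x (m + 2) 0 - x (m + 2) 1)
            * Tform (m + 2) (fun k j => x k (j + Tshift (m + 2) k))

open Classical


theorem Tform_two (x : ℕ → ℕ → ℝ) : Tform 2 x
    = x 0 0 * x 1 0 + x 0 0 * x 1 1 + x 0 1 * x 1 0 - x 0 1 * x 1 1 := rfl

theorem Tform_succ (m : ℕ) (x : ℕ → ℕ → ℝ) : Tform (m+3) x =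
      (x (m + 2) 0 + x (m + 2) 1) * Tform (m + 2) x
        + (x (m + 2) 0 - x (m + 2) 1)
            * Tform (m + 2) (fun k j => x k (j + Tshift (m + 2) k)) := rfl

theorem Tshift_le (m k : ℕ) : Tshift m k ≤ 2 ^ (m - 1) := by
  unfold Tshift
  split
  · exact le_refl _
  · exact Nat.pow_le_pow_right (by norm_num) (by omega)

theorem Tform_congr : ∀ (m : ℕ) (x y : ℕ → ℕ → ℝ),
    (∀ k < m, ∀ j < 2 ^ (m - 1), x k j = y k j) → Tform m x = Tform m y := by
  intro m
  induction m using Nat.strong_induction_on with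
  | _ m ih =>
    match m with
    | 0 => intro x y h; rfl
    | 1 => intro x y h; exact h 0 (by norm_num) 0 (by norm_num)
    | 2 =>
      intro x y h
      rw [Tform_two, Tform_two, h 0 (by norm_num) 0 (by norm_num),
        h 0 (by norm_num) 1 (by norm_num),
        h 1 (by norm_num) 0 (by norm_num), h 1 (by norm_num) 1 (by norm_num)]
    | (m + 3) =>
      intro x y h
      rw [Tform_succ, Tform_succ]
      have h1 : Tform (m + 2) x = Tform (m + 2) y := by
        apply ih (m + 2) (by omega)
        intro k hk j hj
        apply h k (by omega) j
        calc j < 2 ^ (m + 1) := hj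
        _ ≤ 2 ^ (m + 2) := Nat.pow_le_pow_right (by norm_num) (by omega)
      have h2 : Tform (m + 2) (fun k j => x k (j + Tshift (m + 2) k))
          = Tform (m + 2) (fun k j => y k (j + Tshift (m + 2) k)) := by
        apply ih (m + 2) (by omega)
        intro k hk j hj
        apply h k (by omega)
        have h3 : Tshift (m + 2) k ≤ 2 ^ (m + 1) := by
          simpa using Tshift_le (m + 2) k
        have hp : (2:ℕ) ^ (m + 3 - 1) = 2 ^ (m + 1) + 2 ^ (m + 1) := by
          simp only [show m + 3 - 1 = m + 2 from rfl]; ring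
        have hj' : j < 2 ^ (m + 1) := by simpa using hj
        omega
      rw [h1, h2, h (m + 2) (by omega) 0 (Nat.pow_pos (by norm_num)),
        h (m + 2) (by omega) 1 (by
          have : (2:ℕ) ≤ 2 ^ (m + 2) := Nat.le_self_pow (by omega) 2
          simp only [show m + 3 - 1 = m + 2 from rfl]
          omega)]

theorem Tform_update_add : ∀ (m : ℕ), ∀ k < m, ∀ (x : ℕ → ℕ → ℝ) (a b : ℕ → ℝ),
    Tform m (Function.update x k (a + b))
      = Tform m (Function.update x k a) + Tform m (Function.update x k b) := by
  intro m
  induction m using Nat.strong_induction_on with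
  | _ m ih =>
    match m with
    | 0 => intro k hk; omega
    | 1 =>
      intro k hk x a b
      interval_cases k
      simp [Tform, Function.update]
    | 2 =>
      intro k hk x a b
      interval_cases k <;> simp [Tform_two, Function.update] <;> ring
    | (m + 3) =>
      intro k hk x a b
      rw [Tform_succ, Tform_succ, Tform_succ]
      by_cases hkm : k = m + 2
      · subst hkm
        have hc : ∀ (v : ℕ → ℝ),
            Tform (m + 2) (Function.update x (m + 2) v) = Tform (m + 2) x := by
          intro v
          apply Tform_congr
          intro k' hk' j _
          rw [Function.update_of_ne (by omega)]
        have hc2 : ∀ (v : ℕ → ℝ),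
            Tform (m + 2) (fun k' j => Function.update x (m + 2) v k' (j + Tshift (m + 2) k'))
              = Tform (m + 2) (fun k' j => x k' (j + Tshift (m + 2) k')) := by
          intro v
          apply Tform_congr
          intro k' hk' j _
          simp only [Function.update_of_ne (show k' ≠ m + 2 by omega)]
        rw [hc, hc2, hc, hc2, hc, hc2]
        simp only [Function.update_self, Pi.add_apply]
        ring
      · have hkm' : k < m + 2 := by omega
        have hupd : ∀ (v : ℕ → ℝ),
            (fun k' j => Function.update x k v k' (j + Tshift (m + 2) k'))
              = Function.update (fun k' j => x k' (j + Tshift (m + 2) k')) k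
                  (fun j => v (j + Tshift (m + 2) k)) := by
          intro v
          funext k'
          by_cases hk' : k' = k
          · subst hk'; simp [Function.update_self]
          · simp [Function.update_of_ne hk']
        have hnew : ∀ (v : ℕ → ℝ) (j : ℕ), Function.update x k v (m + 2) j = x (m + 2) j := by
          intro v j; rw [Function.update_of_ne (by omega)]
        rw [hupd, hupd, hupd]
        have hshift_add : (fun j => (a + b) (j + Tshift (m + 2) k))
            = (fun j => a (j + Tshift (m + 2) k)) + (fun j => b (j + Tshift (m + 2) k)) := rfl
        rw [hshift_add, ih (m + 2) (by omega) k hkm', ih (m + 2) (by omega) k hkm']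
        simp only [hnew]
        ring

theorem Tform_update_smul : ∀ (m : ℕ), ∀ k < m, ∀ (x : ℕ → ℕ → ℝ) (c : ℝ) (a : ℕ → ℝ),
    Tform m (Function.update x k (c • a)) = c * Tform m (Function.update x k a) := by
  intro m
  induction m using Nat.strong_induction_on with
  | _ m ih =>
    match m with
    | 0 => intro k hk; omega
    | 1 =>
      intro k hk x c a
      interval_cases k
      simp [Tform, Function.update]
    | 2 =>
      intro k hk x c a
      interval_cases k <;> simp [Tform_two, Function.update] <;> ring
    | (m + 3) =>
      intro k hk x c a
      rw [Tform_succ, Tform_succ]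
      by_cases hkm : k = m + 2
      · subst hkm
        have hc : ∀ (v : ℕ → ℝ),
            Tform (m + 2) (Function.update x (m + 2) v) = Tform (m + 2) x := by
          intro v
          apply Tform_congr
          intro k' hk' j _
          rw [Function.update_of_ne (by omega)]
        have hc2 : ∀ (v : ℕ → ℝ),
            Tform (m + 2) (fun k' j => Function.update x (m + 2) v k' (j + Tshift (m + 2) k'))
              = Tform (m + 2) (fun k' j => x k' (j + Tshift (m + 2) k')) := by
          intro v
          apply Tform_congr
          intro k' hk' j _
          simp only [Function.update_of_ne (show k' ≠ m + 2 by omega)]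
        rw [hc, hc2, hc, hc2]
        simp only [Function.update_self, Pi.smul_apply, smul_eq_mul]
        ring
      · have hkm' : k < m + 2 := by omega
        have hupd : ∀ (v : ℕ → ℝ),
            (fun k' j => Function.update x k v k' (j + Tshift (m + 2) k'))
              = Function.update (fun k' j => x k' (j + Tshift (m + 2) k')) k
                  (fun j => v (j + Tshift (m + 2) k)) := by
          intro v
          funext k'
          by_cases hk' : k' = k
          · subst hk'; simp [Function.update_self]
          · simp [Function.update_of_ne hk']
        have hnew : ∀ (v : ℕ → ℝ) (j : ℕ), Function.update x k v (m + 2) j = x (m + 2) j := by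
          intro v j; rw [Function.update_of_ne (by omega)]
        rw [hupd, hupd]
        have hshift_smul : (fun j => (c • a) (j + Tshift (m + 2) k))
            = c • (fun j => a (j + Tshift (m + 2) k)) := rfl
        rw [hshift_smul, ih (m + 2) (by omega) k hkm', ih (m + 2) (by omega) k hkm']
        simp only [hnew]
        ring

theorem Tform_zero_arg (m : ℕ) (x : ℕ → ℕ → ℝ) (k : ℕ) (hk : k < m)
    (hx : ∀ j, x k j = 0) : Tform m x = 0 := by
  have h0 : x k = (0:ℝ) • x k := by funext j; simp [hx j]
  have h1 : Tform m x = Tform m (Function.update x k ((0:ℝ) • x k)) := by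
    rw [← h0, Function.update_eq_self]
  rw [h1, Tform_update_smul m k hk, zero_mul]

open Classical

theorem abs2_bound (a b c d : ℝ) (ha : |a| ≤ 1) (hb : |b| ≤ 1) (hc : |c| ≤ 1)
    (hd : |d| ≤ 1) : |a * c + a * d + b * c - b * d| ≤ 2 := by
  have h1 : a * c + a * d + b * c - b * d = a * (c + d) + b * (c - d) := by ring
  rw [h1]
  calc |a * (c + d) + b * (c - d)| ≤ |a * (c + d)| + |b * (c - d)| := abs_add_le _ _
  _ = |a| * |c + d| + |b| * |c - d| := by rw [abs_mul, abs_mul]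
  _ ≤ 1 * |c + d| + 1 * |c - d| :=
      add_le_add (mul_le_mul_of_nonneg_right ha (abs_nonneg _))
        (mul_le_mul_of_nonneg_right hb (abs_nonneg _))
  _ = |c + d| + |c - d| := by ring
  _ ≤ 2 := by
      rw [abs_le] at hc hd
      rcases abs_cases (c + d) with ⟨h2, _⟩ | ⟨h2, _⟩ <;>
        rcases abs_cases (c - d) with ⟨h3, _⟩ | ⟨h3, _⟩ <;> rw [h2, h3] <;> linarith [hc.1, hc.2, hd.1, hd.2]

theorem Tform_bound : ∀ (m : ℕ) (x : ℕ → ℕ → ℝ),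
    (∀ k < m, ∀ j, |x k j| ≤ 1) → |Tform m x| ≤ 2 ^ (m - 1) := by
  intro m
  induction m using Nat.strong_induction_on with
  | _ m ih =>
    match m with
    | 0 => intro x h; show |(0:ℝ)| ≤ 2 ^ 0; simp
    | 1 => intro x h; show |x 0 0| ≤ 2 ^ 0; simpa using h 0 (by norm_num) 0
    | 2 =>
      intro x h
      rw [Tform_two]
      show _ ≤ (2:ℝ) ^ 1
      rw [pow_one]
      exact abs2_bound _ _ _ _ (h 0 (by norm_num) 0) (h 0 (by norm_num) 1)
        (h 1 (by norm_num) 0) (h 1 (by norm_num) 1)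
    | (m + 3) =>
      intro x h
      rw [Tform_succ]
      have hA : |Tform (m + 2) x| ≤ 2 ^ (m + 1) := by
        have := ih (m + 2) (by omega) x (fun k hk j => h k (by omega) j)
        simpa using this
      have hB : |Tform (m + 2) (fun k j => x k (j + Tshift (m + 2) k))| ≤ 2 ^ (m + 1) := by
        have := ih (m + 2) (by omega) (fun k j => x k (j + Tshift (m + 2) k))
          (fun k hk j => h k (by omega) _)
        simpa using this
      have hp := h (m + 2) (by omega) 0
      have hq := h (m + 2) (by omega) 1
      show _ ≤ (2:ℝ) ^ (m + 2)
      calc |(x (m+2) 0 + x (m+2) 1) * Tform (m + 2) x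
            + (x (m+2) 0 - x (m+2) 1) * Tform (m + 2) (fun k j => x k (j + Tshift (m + 2) k))|
          ≤ |(x (m+2) 0 + x (m+2) 1) * Tform (m + 2) x|
            + |(x (m+2) 0 - x (m+2) 1) * Tform (m + 2) (fun k j => x k (j + Tshift (m + 2) k))| :=
            abs_add_le _ _
        _ = |x (m+2) 0 + x (m+2) 1| * |Tform (m + 2) x|
            + |x (m+2) 0 - x (m+2) 1| * |Tform (m + 2) (fun k j => x k (j + Tshift (m + 2) k))| := by
            rw [abs_mul, abs_mul]
        _ ≤ |x (m+2) 0 + x (m+2) 1| * 2 ^ (m + 1) + |x (m+2) 0 - x (m+2) 1| * 2 ^ (m + 1) :=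
            add_le_add (mul_le_mul_of_nonneg_left hA (abs_nonneg _))
              (mul_le_mul_of_nonneg_left hB (abs_nonneg _))
        _ = (|x (m+2) 0 + x (m+2) 1| + |x (m+2) 0 - x (m+2) 1|) * 2 ^ (m + 1) := by ring
        _ ≤ 2 * 2 ^ (m + 1) := by
            have : |x (m+2) 0 + x (m+2) 1| + |x (m+2) 0 - x (m+2) 1| ≤ 2 := by
              rw [abs_le] at hp hq
              rcases abs_cases (x (m+2) 0 + x (m+2) 1) with ⟨h2, _⟩ | ⟨h2, _⟩ <;>
                rcases abs_cases (x (m+2) 0 - x (m+2) 1) with ⟨h3, _⟩ | ⟨h3, _⟩ <;>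
                rw [h2, h3] <;> linarith [hp.1, hp.2, hq.1, hq.2]
            have h2 : (0:ℝ) ≤ 2 ^ (m + 1) := by positivity
            nlinarith
        _ = 2 ^ (m + 2) := by ring

def Ee (idx : ℕ → ℕ) : ℕ → ℕ → ℝ := fun k j => if j = idx k then 1 else 0

theorem key_div (M k a x s : ℕ) (hk1 : 1 ≤ k) (hk2 : k ≤ M) (hs : s = 2 ^ (M + 1 - k))
    (ha1 : 2 ^ M ≤ a) :
    x / 2 = a / 2 ^ k ↔ (s ≤ x ∧ (x - s) / 2 = (a - 2 ^ M) / 2 ^ k) := by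
  set t := 2 ^ (M - k) with ht
  have e1 : s = 2 * t := by rw [hs, ht, ← pow_succ']; congr 1; omega
  have e2 : (2:ℕ) ^ M = 2 ^ k * t := by rw [ht, ← pow_add]; congr 1; omega
  have h5 : a / 2 ^ k = t + (a - 2 ^ M) / 2 ^ k := by
    conv_lhs => rw [show a = 2 ^ k * t + (a - 2 ^ M) by omega]
    rw [Nat.mul_add_div (Nat.pow_pos (by norm_num))]
  rw [h5, e1]
  generalize (a - 2 ^ M) / 2 ^ k = r
  omega

theorem Tform_coeff : ∀ m, 2 ≤ m → ∀ idx : ℕ → ℕ,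
    |Tform m (Ee idx)| =
      if idx 0 < 2 ^ (m - 1) ∧ ∀ k, 1 ≤ k → k < m → idx k / 2 = idx 0 / 2 ^ k then 1 else 0 := by
  intro m
  induction m using Nat.strong_induction_on with
  | _ m ih =>
  match m with
  | 0 => intro hm; omega
  | 1 => intro hm; omega
  | 2 =>
    intro _ idx
    rw [Tform_two]
    simp only [Ee]
    have hcnd : (idx 0 < 2 ^ (2 - 1) ∧ ∀ k, 1 ≤ k → k < 2 → idx k / 2 = idx 0 / 2 ^ k)
        ↔ (idx 0 < 2 ∧ idx 1 / 2 = idx 0 / 2) := by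
      constructor
      · rintro ⟨h1, h2⟩
        exact ⟨by simpa using h1, by simpa using h2 1 le_rfl one_lt_two⟩
      · rintro ⟨h1, h2⟩
        refine ⟨by simpa using h1, ?_⟩
        intro k hk1 hk2
        interval_cases k
        simpa using h2
    simp only [hcnd]
    set a := idx 0 with ha
    set b := idx 1 with hb
    rcases Nat.lt_or_ge a 2 with h0 | h0
    · rcases Nat.lt_or_ge b 2 with h1 | h1
      · interval_cases a <;> interval_cases b <;> norm_num
      · have hb0 : ¬((0:ℕ) = b) := by omega
        have hb1 : ¬((1:ℕ) = b) := by omega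
        have hcond : ¬(a < 2 ∧ b / 2 = a / 2) := by omega
        rw [if_neg hb0, if_neg hb1, if_neg hcond]
        simp
    · have ha0 : ¬((0:ℕ) = a) := by omega
      have ha1 : ¬((1:ℕ) = a) := by omega
      have hcond : ¬(a < 2 ∧ b / 2 = a / 2) := by omega
      rw [if_neg ha0, if_neg ha1, if_neg hcond]
      simp
  | (n + 3) =>
    intro hm idx
    have ih' : ∀ idx : ℕ → ℕ, |Tform (n + 2) (Ee idx)| =
        if idx 0 < 2 ^ (n + 2 - 1) ∧ ∀ k, 1 ≤ k → k < n + 2 → idx k / 2 = idx 0 / 2 ^ k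
        then 1 else 0 := ih (n + 2) (Nat.lt_succ_self _) (by norm_num)
    show |Tform (n + 3) (Ee idx)| = _
    rw [Tform_succ]
    have en1 : n + 2 - 1 = n + 1 := rfl
    have en2 : n + 3 - 1 = n + 2 := rfl
    have hpw : (2:ℕ) ^ (n + 2) = 2 ^ (n + 1) + 2 ^ (n + 1) := by ring
    have hs0 : Tshift (n + 2) 0 = 2 ^ (n + 1) := by unfold Tshift; norm_num
    have hs : ∀ k, 1 ≤ k → k < n + 2 → Tshift (n + 2) k = 2 ^ (n + 2 - k) := by
      intro k hk1 hk2
      unfold Tshift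
      split
      · congr 1; omega
      · rfl
    have hA : |Tform (n + 2) (Ee idx)| =
        if idx 0 < 2 ^ (n + 2 - 1) ∧ ∀ k, 1 ≤ k → k < n + 2 → idx k / 2 = idx 0 / 2 ^ k
        then 1 else 0 := ih' idx
    have hB : |Tform (n + 2) (fun k j => Ee idx k (j + Tshift (n + 2) k))|
        = if ((∀ k < n + 2, Tshift (n + 2) k ≤ idx k) ∧
            ((idx 0 - 2 ^ (n + 1) < 2 ^ (n + 2 - 1)) ∧
              ∀ k, 1 ≤ k → k < n + 2 →
                (idx k - Tshift (n + 2) k) / 2 = (idx 0 - 2 ^ (n + 1)) / 2 ^ k))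
          then 1 else 0 := by
      by_cases hr : ∀ k < n + 2, Tshift (n + 2) k ≤ idx k
      · have heq : Tform (n + 2) (fun k j => Ee idx k (j + Tshift (n + 2) k))
            = Tform (n + 2) (Ee (fun k => idx k - Tshift (n + 2) k)) := by
          apply Tform_congr
          intro k hk j _
          simp only [Ee]
          have hrk := hr k hk
          congr 1
          apply propext
          constructor <;> intro <;> omega
        rw [heq, ih']
        simp only [hs0]
        by_cases hx : (idx 0 - 2 ^ (n + 1) < 2 ^ (n + 2 - 1) ∧
            ∀ k, 1 ≤ k → k < n + 2 →
              (idx k - Tshift (n + 2) k) / 2 = (idx 0 - 2 ^ (n + 1)) / 2 ^ k)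
        · rw [if_pos hx, if_pos ⟨hr, hx⟩]
        · rw [if_neg hx, if_neg (fun h => hx h.2)]
      · push_neg at hr
        obtain ⟨k, hk, hlt⟩ := hr
        rw [Tform_zero_arg (n + 2) _ k hk, abs_zero, if_neg]
        · intro h
          exact absurd (h.1 k hk) (by omega)
        · intro j
          simp only [Ee]
          rw [if_neg]
          omega
    set i := idx (n + 2) with hi
    have hdis : ¬((idx 0 < 2 ^ (n + 2 - 1) ∧
          ∀ k, 1 ≤ k → k < n + 2 → idx k / 2 = idx 0 / 2 ^ k) ∧
        ((∀ k < n + 2, Tshift (n + 2) k ≤ idx k) ∧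
          ((idx 0 - 2 ^ (n + 1) < 2 ^ (n + 2 - 1)) ∧
            ∀ k, 1 ≤ k → k < n + 2 →
              (idx k - Tshift (n + 2) k) / 2 = (idx 0 - 2 ^ (n + 1)) / 2 ^ k))) := by
      rintro ⟨⟨h0, _⟩, ⟨hr, _⟩⟩
      have h1 := hr 0 (by omega)
      rw [hs0] at h1
      rw [en1] at h0
      omega
    have hMiff : (idx 0 < 2 ^ (n + 3 - 1) ∧ ∀ k, 1 ≤ k → k < n + 3 → idx k / 2 = idx 0 / 2 ^ k)
        ↔ (i < 2 ∧ ((idx 0 < 2 ^ (n + 2 - 1) ∧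
            ∀ k, 1 ≤ k → k < n + 2 → idx k / 2 = idx 0 / 2 ^ k) ∨
          ((∀ k < n + 2, Tshift (n + 2) k ≤ idx k) ∧
            ((idx 0 - 2 ^ (n + 1) < 2 ^ (n + 2 - 1)) ∧
              ∀ k, 1 ≤ k → k < n + 2 →
                (idx k - Tshift (n + 2) k) / 2 = (idx 0 - 2 ^ (n + 1)) / 2 ^ k)))) := by
      rw [en2, en1]
      constructor
      · rintro ⟨h1, h2⟩
        have hlast := h2 (n + 2) (by omega) (by omega)
        rw [← hi, Nat.div_eq_of_lt h1] at hlast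
        have hi2 : i < 2 := by omega
        refine ⟨hi2, ?_⟩
        by_cases h0 : idx 0 < 2 ^ (n + 1)
        · left
          exact ⟨h0, fun k hk1 hk2 => h2 k hk1 (by omega)⟩
        · right
          push_neg at h0
          refine ⟨?_, by omega, ?_⟩
          · intro k hk
            rcases Nat.eq_zero_or_pos k with rfl | hk1
            · rw [hs0]; exact h0
            · exact ((key_div (n + 1) k (idx 0) (idx k) (Tshift (n + 2) k) hk1 (by omega)
                (by rw [hs k hk1 hk]) h0).mp (h2 k hk1 (by omega))).1
          · intro k hk1 hk2
            exact ((key_div (n + 1) k (idx 0) (idx k) (Tshift (n + 2) k) hk1 (by omega)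
              (by rw [hs k hk1 hk2]) h0).mp (h2 k hk1 (by omega))).2
      · rintro ⟨hi2, hAB⟩
        rcases hAB with ⟨h0, h2⟩ | ⟨hr, h1, h2⟩
        · refine ⟨by omega, ?_⟩
          intro k hk1 hk2
          rcases Nat.lt_or_ge k (n + 2) with hk3 | hk3
          · exact h2 k hk1 hk3
          · have hk4 : k = n + 2 := by omega
            subst hk4
            rw [← hi, Nat.div_eq_of_lt (show idx 0 < 2 ^ (n + 2) by omega)]
            omega
        · have h0 : 2 ^ (n + 1) ≤ idx 0 := by have := hr 0 (by omega); rwa [hs0] at this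
          refine ⟨by omega, ?_⟩
          intro k hk1 hk2
          rcases Nat.lt_or_ge k (n + 2) with hk3 | hk3
          · exact (key_div (n + 1) k (idx 0) (idx k) (Tshift (n + 2) k) hk1 (by omega)
              (by rw [hs k hk1 hk3]) h0).mpr
              ⟨by have := hr k hk3; omega, h2 k hk1 hk3⟩
          · have hk4 : k = n + 2 := by omega
            subst hk4
            rw [← hi, Nat.div_eq_of_lt (show idx 0 < 2 ^ (n + 2) by omega)]
            omega
    have hEe0 : Ee idx (n + 2) 0 = if (0:ℕ) = i then 1 else 0 := by rw [hi]; rfl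
    have hEe1 : Ee idx (n + 2) 1 = if (1:ℕ) = i then 1 else 0 := by rw [hi]; rfl
    rw [hEe0, hEe1]
    rcases Nat.lt_or_ge i 2 with hi2 | hi2
    · by_cases hCa : (idx 0 < 2 ^ (n + 2 - 1) ∧
          ∀ k, 1 ≤ k → k < n + 2 → idx k / 2 = idx 0 / 2 ^ k)
      · have hBz : Tform (n + 2) (fun k j => Ee idx k (j + Tshift (n + 2) k)) = 0 := by
          rw [← abs_eq_zero, hB, if_neg (fun h => hdis ⟨hCa, h⟩)]
        have hA1 : |Tform (n + 2) (Ee idx)| = 1 := by rw [hA, if_pos hCa]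
        rw [hBz, mul_zero, add_zero, if_pos (hMiff.mpr ⟨hi2, Or.inl hCa⟩), abs_mul, hA1,
          mul_one]
        interval_cases i <;> norm_num
      · by_cases hCb : ((∀ k < n + 2, Tshift (n + 2) k ≤ idx k) ∧
            ((idx 0 - 2 ^ (n + 1) < 2 ^ (n + 2 - 1)) ∧
              ∀ k, 1 ≤ k → k < n + 2 →
                (idx k - Tshift (n + 2) k) / 2 = (idx 0 - 2 ^ (n + 1)) / 2 ^ k))
        · have hAz : Tform (n + 2) (Ee idx) = 0 := by
            rw [← abs_eq_zero, hA, if_neg hCa]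
          have hB1 : |Tform (n + 2) (fun k j => Ee idx k (j + Tshift (n + 2) k))| = 1 := by
            rw [hB, if_pos hCb]
          rw [hAz, mul_zero, zero_add, if_pos (hMiff.mpr ⟨hi2, Or.inr hCb⟩), abs_mul, hB1,
            mul_one]
          interval_cases i <;> norm_num
        · have hAz : Tform (n + 2) (Ee idx) = 0 := by
            rw [← abs_eq_zero, hA, if_neg hCa]
          have hBz : Tform (n + 2) (fun k j => Ee idx k (j + Tshift (n + 2) k)) = 0 := by
            rw [← abs_eq_zero, hB, if_neg hCb]
          rw [hAz, hBz, mul_zero, mul_zero, add_zero, abs_zero, if_neg]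
          intro h
          rcases (hMiff.mp h).2 with h' | h'
          · exact hCa h'
          · exact hCb h'
    · rw [if_neg (show ¬(0:ℕ) = i by omega), if_neg (show ¬(1:ℕ) = i by omega)]
      rw [if_neg (fun h => by have := (hMiff.mp h).1; omega)]
      simp

theorem mixedNorm_succ (m N : ℕ) (q : ℕ → ℝ) (f : (ℕ → ℕ) → ℝ) :
    mixedNorm (m + 1) N q f
      = (∑ j : Fin N, (mixedNorm m N (fun i => q (i + 1))
          (fun idx => f (fun i => if i = 0 then (j : ℕ) else idx (i - 1)))) ^ q 0)
        ^ (1 / q 0) := rfl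

theorem mixedNorm_zero : ∀ (m N : ℕ) (q : ℕ → ℝ), (∀ i < m, 1 ≤ q i) →
    ∀ f : (ℕ → ℕ) → ℝ, (∀ idx, f idx = 0) → mixedNorm m N q f = 0 := by
  intro m
  induction m with
  | zero =>
    intro N q _ f hf
    show |f fun _ => 0| = 0
    rw [hf]; simp
  | succ m ih =>
    intro N q hq f hf
    rw [mixedNorm_succ]
    have hq0 : q 0 ≠ 0 := by have := hq 0 (by omega); linarith
    have hterm : ∀ j : Fin N, (mixedNorm m N (fun i => q (i + 1))
        (fun idx => f (fun i => if i = 0 then (j : ℕ) else idx (i - 1)))) ^ q 0 = 0 := by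
      intro j
      rw [ih N _ (fun i hi => hq (i + 1) (by omega)) _ (fun idx => hf _),
        Real.zero_rpow hq0]
    rw [Finset.sum_congr rfl (fun j _ => hterm j), Finset.sum_const, smul_zero,
      Real.zero_rpow (one_div_ne_zero hq0)]

theorem mixedNorm_indicator : ∀ (m N : ℕ) (q : ℕ → ℝ), (∀ i < m, 1 ≤ q i) →
    ∀ a : ℕ, (∀ k < m, 2 * (a / 2 ^ k) + 1 < N) →
    ∀ f : (ℕ → ℕ) → ℝ,
    (∀ idx : ℕ → ℕ, |f idx| = if (∀ k < m, idx k / 2 = a / 2 ^ k) then 1 else 0) →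
    mixedNorm m N q f = 2 ^ (∑ k ∈ Finset.range m, 1 / q k) := by
  intro m
  induction m with
  | zero =>
    intro N q _ a _ f hf
    show |f fun _ => 0| = _
    rw [hf, if_pos (by intro k hk; omega)]
    simp
  | succ m ih =>
    intro N q hq a ha f hf
    rw [mixedNorm_succ]
    have hq0 : 1 ≤ q 0 := hq 0 (by omega)
    have hq0' : q 0 ≠ 0 := by linarith
    set X : ℝ := 2 ^ (∑ k ∈ Finset.range m, 1 / q (k + 1)) with hX
    have hXpos : 0 < X := Real.rpow_pos_of_pos (by norm_num) _
    have hdd : ∀ k : ℕ, a / 2 / 2 ^ k = a / 2 ^ (k + 1) := by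
      intro k
      rw [Nat.div_div_eq_div_mul, ← pow_succ']
    have hiff : ∀ (j : Fin N) (idx : ℕ → ℕ),
        (∀ k < m + 1, (fun i => if i = 0 then (j : ℕ) else idx (i - 1)) k / 2 = a / 2 ^ k)
          ↔ ((j : ℕ) / 2 = a ∧ ∀ k < m, idx k / 2 = a / 2 / 2 ^ k) := by
      intro j idx
      constructor
      · intro h
        refine ⟨by simpa using h 0 (by omega), ?_⟩
        intro k hk
        have := h (k + 1) (by omega)
        rw [hdd k]
        simpa using this
      · rintro ⟨h1, h2⟩ k hk
        rcases Nat.eq_zero_or_pos k with rfl | hk1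
        · simpa using h1
        · obtain ⟨k', rfl⟩ : ∃ k', k = k' + 1 := ⟨k - 1, by omega⟩
          have := h2 k' (by omega)
          rw [hdd k'] at this
          simpa using this
    have hterm : ∀ j : Fin N,
        (mixedNorm m N (fun i => q (i + 1))
          (fun idx => f (fun i => if i = 0 then (j : ℕ) else idx (i - 1)))) ^ q 0
        = if (j : ℕ) / 2 = a then X ^ q 0 else 0 := by
      intro j
      by_cases hj : (j : ℕ) / 2 = a
      · rw [if_pos hj]
        congr 1
        apply ih N _ (fun i hi => hq (i + 1) (by omega)) (a / 2)
        · intro k hk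
          have := ha (k + 1) (by omega)
          rwa [← hdd k] at this
        · intro idx
          rw [hf]
          by_cases hc : ∀ k < m, idx k / 2 = a / 2 / 2 ^ k
          · rw [if_pos ((hiff j idx).mpr ⟨hj, hc⟩), if_pos hc]
          · rw [if_neg (fun h => hc ((hiff j idx).mp h).2), if_neg hc]
      · rw [if_neg hj]
        rw [mixedNorm_zero m N _ (fun i hi => hq (i + 1) (by omega)) _ (fun idx => by
          have := hf (fun i => if i = 0 then (j : ℕ) else idx (i - 1))
          rw [if_neg (fun h => hj ((hiff j idx).mp h).1)] at this
          exact abs_eq_zero.mp this), Real.zero_rpow hq0']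
    rw [Finset.sum_congr rfl (fun j _ => hterm j), Finset.sum_ite, Finset.sum_const,
      Finset.sum_const_zero, add_zero]
    have h2a : 2 * a + 1 < N := by
      have := ha 0 (by omega)
      simpa using this
    have hcard : (Finset.univ.filter (fun j : Fin N => (j : ℕ) / 2 = a)).card = 2 := by
      have hset : (Finset.univ.filter (fun j : Fin N => (j : ℕ) / 2 = a))
          = {(⟨2 * a, by omega⟩ : Fin N), ⟨2 * a + 1, by omega⟩} := by
        ext j
        simp only [Finset.mem_filter, Finset.mem_univ, true_and, Finset.mem_insert,
          Finset.mem_singleton, Fin.ext_iff]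
        omega
      rw [hset, Finset.card_pair (by simp [Fin.ext_iff])]
    rw [hcard, nsmul_eq_mul, Nat.cast_ofNat]
    rw [Real.mul_rpow (by norm_num) (Real.rpow_nonneg hXpos.le _),
      ← Real.rpow_mul hXpos.le, mul_one_div_cancel hq0', Real.rpow_one,
      Finset.sum_range_succ', Real.rpow_add (by norm_num : (0:ℝ) < 2), hX, mul_comm]

theorem mixedNorm_value (p : ℕ) (q : ℕ → ℝ) (hq : ∀ i < p + 2, 1 ≤ q i)
    (f : (ℕ → ℕ) → ℝ)
    (hf : ∀ idx : ℕ → ℕ, |f idx| =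
      if (idx 0 < 2 ^ (p + 1) ∧ ∀ k, 1 ≤ k → k < p + 2 → idx k / 2 = idx 0 / 2 ^ k)
      then 1 else 0) :
    mixedNorm (p + 2) (2 ^ (p + 1)) q f
      = 2 ^ (((p:ℝ) + 1) * (1 / q 0) + ∑ k ∈ Finset.range (p + 1), 1 / q (k + 1)) := by
  rw [mixedNorm_succ]
  set X : ℝ := 2 ^ (∑ k ∈ Finset.range (p + 1), 1 / q (k + 1)) with hX
  have hXpos : 0 < X := Real.rpow_pos_of_pos (by norm_num) _
  have hq0 : 1 ≤ q 0 := hq 0 (by omega)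
  have hq0' : q 0 ≠ 0 := by linarith
  have hterm : ∀ j : Fin (2 ^ (p + 1)),
      (mixedNorm (p + 1) (2 ^ (p + 1)) (fun i => q (i + 1))
        (fun idx => f (fun i => if i = 0 then (j : ℕ) else idx (i - 1)))) = X := by
    intro j
    apply mixedNorm_indicator (p + 1) (2 ^ (p + 1)) _ (fun i hi => hq (i + 1) (by omega))
      ((j : ℕ) / 2)
    · intro k hk
      have h1 : (j:ℕ) / 2 / 2 ^ k * 2 ^ (k + 1) ≤ (j:ℕ) := by
        rw [Nat.div_div_eq_div_mul, ← pow_succ']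
        exact Nat.div_mul_le_self _ _
      have h2 : (2:ℕ) ≤ 2 ^ (k + 1) := by
        calc (2:ℕ) = 2 ^ 1 := (pow_one 2).symm
        _ ≤ 2 ^ (k + 1) := Nat.pow_le_pow_right (by norm_num) (by omega)
      have h3 : 2 * ((j:ℕ) / 2 / 2 ^ k) ≤ (j:ℕ) := by
        calc 2 * ((j:ℕ) / 2 / 2 ^ k) ≤ 2 ^ (k + 1) * ((j:ℕ) / 2 / 2 ^ k) :=
              Nat.mul_le_mul_right _ h2
        _ = (j:ℕ) / 2 / 2 ^ k * 2 ^ (k + 1) := mul_comm _ _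
        _ ≤ (j:ℕ) := h1
      have h4 : (j:ℕ) < 2 ^ (p + 1) := j.isLt
      have h5 : (2:ℕ) ^ (p + 1) = 2 * 2 ^ p := by rw [pow_succ']
      omega
    · intro idx
      rw [hf]
      have hiff : (((fun i => if i = 0 then (j:ℕ) else idx (i - 1)) 0 < 2 ^ (p + 1)) ∧
          ∀ k, 1 ≤ k → k < p + 2 →
            (fun i => if i = 0 then (j:ℕ) else idx (i - 1)) k / 2
              = (fun i => if i = 0 then (j:ℕ) else idx (i - 1)) 0 / 2 ^ k)
          ↔ (∀ k < p + 1, idx k / 2 = (j:ℕ) / 2 / 2 ^ k) := by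
        constructor
        · intro h k hk
          have := h.2 (k + 1) (by omega) (by omega)
          rw [Nat.div_div_eq_div_mul, ← pow_succ']
          simpa using this
        · intro h
          refine ⟨by simpa using j.isLt, ?_⟩
          intro k hk1 hk2
          obtain ⟨k', rfl⟩ : ∃ k', k = k' + 1 := ⟨k - 1, by omega⟩
          have := h k' (by omega)
          rw [Nat.div_div_eq_div_mul, ← pow_succ'] at this
          simpa using this
      by_cases hc : ∀ k < p + 1, idx k / 2 = (j:ℕ) / 2 / 2 ^ k
      · rw [if_pos (hiff.mpr hc), if_pos hc]
      · rw [if_neg (fun h => hc (hiff.mp h)), if_neg hc]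
  have hsum : (∑ j : Fin (2 ^ (p + 1)),
      (mixedNorm (p + 1) (2 ^ (p + 1)) (fun i => q (i + 1))
        (fun idx => f (fun i => if i = 0 then (j : ℕ) else idx (i - 1)))) ^ q 0)
      = ∑ _j : Fin (2 ^ (p + 1)), X ^ q 0 :=
    Finset.sum_congr rfl (fun j _ => by rw [hterm j])
  rw [hsum, Finset.sum_const, Finset.card_univ, Fintype.card_fin, nsmul_eq_mul]
  have hNcast : ((2 ^ (p + 1) : ℕ) : ℝ) = (2:ℝ) ^ ((p : ℝ) + 1) := by
    push_cast
    rw [← Real.rpow_natCast 2 (p + 1)]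
    push_cast
    ring_nf
  rw [hNcast, Real.mul_rpow (by positivity) (Real.rpow_nonneg hXpos.le _),
    ← Real.rpow_mul (by norm_num : (0:ℝ) ≤ 2),
    ← Real.rpow_mul hXpos.le, mul_one_div_cancel hq0', Real.rpow_one,
    Real.rpow_add (by norm_num : (0:ℝ) < 2)]

noncomputable def Tmap (m n : ℕ) : MultilinearMap ℝ (fun _ : Fin m => (Fin n → ℝ)) ℝ where
  toFun x := Tform m (fun k j =>
    if hk : k < m then (if hj : j < n then x ⟨k, hk⟩ ⟨j, hj⟩ else 0) else 0)
  map_update_add' := by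
    intro dec x i a b
    have key : ∀ (x : Fin m → Fin n → ℝ) (v : Fin n → ℝ),
        (fun k j => if hk : k < m then
            (if hj : j < n then Function.update x i v ⟨k, hk⟩ ⟨j, hj⟩ else 0) else 0)
          = Function.update (fun k j => if hk : k < m then
              (if hj : j < n then x ⟨k, hk⟩ ⟨j, hj⟩ else 0) else 0)
            (i : ℕ) (fun j => if hj : j < n then v ⟨j, hj⟩ else 0) := by
      intro x v
      funext k
      by_cases hk : k = (i : ℕ)
      · subst hk
        rw [Function.update_self]
        funext j
        rw [dif_pos i.isLt]
        by_cases hj : j < n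
        · rw [dif_pos hj, dif_pos hj, Function.update_apply, if_pos (Fin.ext rfl)]
        · rw [dif_neg hj, dif_neg hj]
      · rw [Function.update_of_ne hk]
        funext j
        by_cases hkm : k < m
        · rw [dif_pos hkm, dif_pos hkm]
          by_cases hj : j < n
          · rw [dif_pos hj, dif_pos hj,
              Function.update_apply, if_neg (fun h => hk (congrArg Fin.val h))]
          · rw [dif_neg hj, dif_neg hj]
        · rw [dif_neg hkm, dif_neg hkm]
    have hrow : (fun j => if hj : j < n then (a + b) ⟨j, hj⟩ else 0)
        = (fun j => if hj : j < n then a ⟨j, hj⟩ else 0)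
          + (fun j => if hj : j < n then b ⟨j, hj⟩ else 0) := by
      funext j
      by_cases hj : j < n <;> simp [hj]
    show Tform m _ = Tform m _ + Tform m _
    rw [key, key, key, hrow]
    exact Tform_update_add m (i : ℕ) i.isLt _ _ _
  map_update_smul' := by
    intro dec x i c a
    have key : ∀ (x : Fin m → Fin n → ℝ) (v : Fin n → ℝ),
        (fun k j => if hk : k < m then
            (if hj : j < n then Function.update x i v ⟨k, hk⟩ ⟨j, hj⟩ else 0) else 0)
          = Function.update (fun k j => if hk : k < m then
              (if hj : j < n then x ⟨k, hk⟩ ⟨j, hj⟩ else 0) else 0)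
            (i : ℕ) (fun j => if hj : j < n then v ⟨j, hj⟩ else 0) := by
      intro x v
      funext k
      by_cases hk : k = (i : ℕ)
      · subst hk
        rw [Function.update_self]
        funext j
        rw [dif_pos i.isLt]
        by_cases hj : j < n
        · rw [dif_pos hj, dif_pos hj, Function.update_apply, if_pos (Fin.ext rfl)]
        · rw [dif_neg hj, dif_neg hj]
      · rw [Function.update_of_ne hk]
        funext j
        by_cases hkm : k < m
        · rw [dif_pos hkm, dif_pos hkm]
          by_cases hj : j < n
          · rw [dif_pos hj, dif_pos hj,
              Function.update_apply, if_neg (fun h => hk (congrArg Fin.val h))]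
          · rw [dif_neg hj, dif_neg hj]
        · rw [dif_neg hkm, dif_neg hkm]
    have hrow : (fun j => if hj : j < n then (c • a) ⟨j, hj⟩ else 0)
        = c • (fun j => if hj : j < n then a ⟨j, hj⟩ else 0) := by
      funext j
      by_cases hj : j < n <;> simp [hj]
    show Tform m _ = c • Tform m _
    rw [key, key, hrow, smul_eq_mul]
    exact Tform_update_smul m (i : ℕ) i.isLt _ _ _

theorem Tmap_apply (m n : ℕ) (x : Fin m → Fin n → ℝ) :
    Tmap m n x = Tform m (fun k j =>
      if hk : k < m then (if hj : j < n then x ⟨k, hk⟩ ⟨j, hj⟩ else 0) else 0) := rfl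

theorem Tmap_coeff (m : ℕ) (hm : 2 ≤ m) (idx : ℕ → ℕ) :
    |Tmap m (2 ^ (m - 1)) (fun k => eVec (2 ^ (m - 1)) (idx (k : ℕ)))| =
      if (idx 0 < 2 ^ (m - 1) ∧ ∀ k, 1 ≤ k → k < m → idx k / 2 = idx 0 / 2 ^ k)
      then 1 else 0 := by
  rw [Tmap_apply]
  by_cases hr : ∀ k < m, idx k < 2 ^ (m - 1)
  · have heq : Tform m (fun k j => if hk : k < m then
        (if hj : j < 2 ^ (m - 1) then
          (fun k : Fin m => eVec (2 ^ (m - 1)) (idx (k : ℕ))) ⟨k, hk⟩ ⟨j, hj⟩ else 0) else 0)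
        = Tform m (Ee idx) := by
      apply Tform_congr
      intro k hk j hj
      rw [dif_pos hk, dif_pos hj]
      rfl
    rw [heq]
    exact Tform_coeff m hm idx
  · push_neg at hr
    obtain ⟨k0, hk0, hge⟩ := hr
    rw [Tform_zero_arg m _ k0 hk0, abs_zero, if_neg]
    · rintro ⟨h1, h2⟩
      rcases Nat.eq_zero_or_pos k0 with rfl | hk1
      · omega
      · have h3 := h2 k0 hk1 hk0
        have e1 : (2:ℕ) ^ (m - 1) = 2 ^ k0 * 2 ^ (m - 1 - k0) := by
          rw [← pow_add]; congr 1; omega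
        have h4 : idx 0 / 2 ^ k0 < 2 ^ (m - 1 - k0) :=
          Nat.div_lt_of_lt_mul (by rw [← e1]; exact h1)
        have h5 : 2 ^ (m - 1 - k0) * 2 ≤ 2 ^ (m - 1) := by
          rw [← pow_succ]
          apply Nat.pow_le_pow_right (by norm_num)
          omega
        omega
    · intro j
      rw [dif_pos hk0]
      by_cases hj : j < 2 ^ (m - 1)
      · rw [dif_pos hj]
        show (if (j:ℕ) = idx k0 then (1:ℝ) else 0) = 0
        rw [if_neg]
        omega
      · rw [dif_neg hj]

theorem supNorm_facts (m n : ℕ) :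
    0 ≤ supNorm m n (Tmap m n) ∧ supNorm m n (Tmap m n) ≤ 2 ^ (m - 1) := by
  have hub : ∀ v ∈ {v : ℝ | ∃ x : Fin m → Fin n → ℝ,
      (∀ i, ‖x i‖ ≤ 1) ∧ v = |Tmap m n x|}, v ≤ 2 ^ (m - 1) := by
    rintro v ⟨x, hx, rfl⟩
    rw [Tmap_apply]
    apply Tform_bound
    intro k hk j
    rw [dif_pos hk]
    by_cases hj : j < n
    · rw [dif_pos hj]
      calc |x ⟨k, hk⟩ ⟨j, hj⟩| ≤ ‖x ⟨k, hk⟩‖ := by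
            rw [← Real.norm_eq_abs]
            exact norm_le_pi_norm (x ⟨k, hk⟩) ⟨j, hj⟩
      _ ≤ 1 := hx _
    · rw [dif_neg hj]; norm_num
  have hmem : |Tmap m n 0| ∈ {v : ℝ | ∃ x : Fin m → Fin n → ℝ,
      (∀ i, ‖x i‖ ≤ 1) ∧ v = |Tmap m n x|} :=
    ⟨0, fun i => by simp, rfl⟩
  constructor
  · exact le_trans (abs_nonneg _)
      (le_csSup ⟨2 ^ (m - 1), fun v hv => hub v hv⟩ hmem)
  · exact csSup_le ⟨_, hmem⟩ hub


/-- Lower bound for the constants of the generalized mixed-norm inequality: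
if `Σ 1/qᵢ = (m+1)/2` and the mixed-norm inequality with exponents
`(q₁,...,q_m)` holds with constant `C` for all real `m`-linear forms on
`(ℓ∞ⁿ)^m` and all `n`, then
`C ≥ 2^{((m-1)q̂₁ + Σ_{i=2}^m q̂ᵢ - (m-1)q₁⋯q_m)/(q₁⋯q_m)}` where
`q̂ᵢ = (q₁⋯q_m)/qᵢ`. -/
theorem stmt_5 (m : ℕ) (hm : 2 ≤ m) (q : ℕ → ℝ)
    (hq : ∀ i < m, q i ∈ Set.Icc (1:ℝ) 2)
    (hsum : ∑ i ∈ Finset.range m, 1 / q i = ((m : ℝ) + 1) / 2)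
    (C : ℝ)
    (hC : ∀ n : ℕ, ∀ T : MultilinearMap ℝ (fun _ : Fin m => (Fin n → ℝ)) ℝ,
      mixedNorm m n q (fun idx => T fun k => eVec n (idx (k : ℕ)))
        ≤ C * supNorm m n T) :
    (2:ℝ) ^ ((((m : ℝ) - 1) * ((∏ i ∈ Finset.range m, q i) / q 0)
        + (∑ i ∈ Finset.Ico 1 m, (∏ i ∈ Finset.range m, q i) / q i)
        - ((m : ℝ) - 1) * ∏ i ∈ Finset.range m, q i)
      / ∏ i ∈ Finset.range m, q i) ≤ C := by
  obtain ⟨p, rfl⟩ : ∃ p, m = p + 2 := ⟨m - 2, by omega⟩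
  have hq1 : ∀ i < p + 2, 1 ≤ q i := fun i hi => (hq i hi).1
  have hqpos : ∀ i < p + 2, 0 < q i := fun i hi => lt_of_lt_of_le one_pos (hq1 i hi)
  set Q := ∏ i ∈ Finset.range (p + 2), q i with hQdef
  have hQpos : 0 < Q :=
    Finset.prod_pos (fun i hi => hqpos i (Finset.mem_range.mp hi))
  have hf : ∀ idx : ℕ → ℕ,
      |(Tmap (p + 2) (2 ^ (p + 1))) (fun k => eVec (2 ^ (p + 1)) (idx (k : ℕ)))| =
      if (idx 0 < 2 ^ (p + 1) ∧ ∀ k, 1 ≤ k → k < p + 2 → idx k / 2 = idx 0 / 2 ^ k)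
      then 1 else 0 := fun idx => Tmap_coeff (p + 2) (by omega) idx
  have hval := mixedNorm_value p q hq1 _ hf
  have h1 := hC (2 ^ (p + 1)) (Tmap (p + 2) (2 ^ (p + 1)))
  rw [hval] at h1
  obtain ⟨hsup0, hsup_le⟩ := supNorm_facts (p + 2) (2 ^ (p + 1))
  have hEpos : (0:ℝ) < 2 ^ (((p:ℝ) + 1) * (1 / q 0)
      + ∑ k ∈ Finset.range (p + 1), 1 / q (k + 1)) :=
    Real.rpow_pos_of_pos (by norm_num) _
  have hCpos : 0 < C := by
    by_contra hneg
    push_neg at hneg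
    have hle : C * supNorm (p + 2) (2 ^ (p + 1)) (Tmap (p + 2) (2 ^ (p + 1))) ≤ 0 :=
      mul_nonpos_of_nonpos_of_nonneg hneg hsup0
    linarith
  have h2 : (2:ℝ) ^ (((p:ℝ) + 1) * (1 / q 0)
      + ∑ k ∈ Finset.range (p + 1), 1 / q (k + 1)) ≤ C * 2 ^ (p + 1 : ℕ) :=
    le_trans h1 (mul_le_mul_of_nonneg_left hsup_le hCpos.le)
  have hcast : ((2:ℝ) ^ (p + 1 : ℕ)) = (2:ℝ) ^ ((p:ℝ) + 1) := by
    rw [← Real.rpow_natCast 2 (p + 1)]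
    push_cast
    ring_nf
  have h3 : (2:ℝ) ^ ((((p:ℝ) + 1) * (1 / q 0)
      + ∑ k ∈ Finset.range (p + 1), 1 / q (k + 1)) - ((p:ℝ) + 1)) ≤ C := by
    rw [Real.rpow_sub (by norm_num : (0:ℝ) < 2), div_le_iff₀ (by positivity)]
    rw [← hcast]
    exact h2
  have hdivQ : ∀ c : ℝ, Q / c / Q = 1 / c := by
    intro c
    rw [div_div, mul_comm c Q, ← div_div, div_self hQpos.ne']
  have hexp : ((((p + 2 : ℕ) : ℝ) - 1) * (Q / q 0)
      + (∑ i ∈ Finset.Ico 1 (p + 2), Q / q i)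
      - (((p + 2 : ℕ) : ℝ) - 1) * Q) / Q
      = (((p:ℝ) + 1) * (1 / q 0)
        + ∑ k ∈ Finset.range (p + 1), 1 / q (k + 1)) - ((p:ℝ) + 1) := by
    rw [sub_div, add_div, Finset.sum_div, mul_div_assoc, hdivQ (q 0), mul_div_assoc,
      div_self hQpos.ne', mul_one]
    have hIco : ∑ i ∈ Finset.Ico 1 (p + 2), Q / q i / Q
        = ∑ k ∈ Finset.range (p + 1), 1 / q (k + 1) := by
      rw [Finset.sum_Ico_eq_sum_range]
      exact Finset.sum_congr rfl (fun i _ => by rw [hdivQ, add_comm])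
    rw [hIco]
    push_cast
    ring
  rw [hexp]
  exact h3
end

section
/- If q₁ = 1 and q₂ = ⋯ = q_m = 2, then any constant C satisfying Σ_{j₁=1}^{n}(Σ_{j₂,...,j_m=1}^{n}|T(e_{j₁},...,e_{j_m})|²)^{1/2} ≤ C‖T‖ for all real m-linear forms T on (ℓ∞ⁿ)^m and all n satisfies C ≥ 2^{(m-1)/2}. -/
open Finset

lemma sum_pi_fin_succ {p : ℕ} {α : Type*} [AddCommMonoid α] (g : (Fin (p+1) → Fin 2) → α) :
    ∑ f : Fin (p+1) → Fin 2, g f =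
      ∑ a : Fin 2, ∑ f' : Fin p → Fin 2, g (Fin.cons a f') := by
  rw [← Fintype.sum_equiv (Fin.consEquiv (fun _ : Fin (p+1) => Fin 2))
      (fun q => g (Fin.consEquiv _ q)) g (fun q => rfl), Fintype.sum_prod_type]
  rfl

lemma twoabs {a b : ℝ} (ha : |a| ≤ 1) (hb : |b| ≤ 1) : |a + b| + |a - b| ≤ 2 := by
  rcases abs_cases (a+b) with ⟨h1,_⟩|⟨h1,_⟩ <;> rcases abs_cases (a-b) with ⟨h2,_⟩|⟨h2,_⟩ <;>
    rcases abs_le.1 ha with ⟨_,_⟩ <;> rcases abs_le.1 hb with ⟨_,_⟩ <;> linarith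

lemma keyF (p : ℕ) : ∀ (X : (Fin p → Fin 2) → ℝ) (Y : Fin p → Fin 2 → ℝ),
    (∀ u, |X u| ≤ 1) → (∀ k j, |Y k j| ≤ 1) →
    |∑ u : Fin p → Fin 2, ∑ v : Fin p → Fin 2,
      ((-1 : ℝ) ^ (∑ k, (u k : ℕ) * (v k : ℕ))) * X u * ∏ k, Y k (v k)| ≤ 2 ^ p := by
  induction p with
  | zero => intro X Y hX hY; simpa using hX _
  | succ p ih =>
    intro X Y hX hY
    have hrw : ∀ (u : Fin (p+1) → Fin 2),
        ∑ v : Fin (p+1) → Fin 2,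
          ((-1 : ℝ) ^ (∑ k, (u k : ℕ) * (v k : ℕ))) * X u * ∏ k, Y k (v k)
        = ∑ b : Fin 2, ((-1 : ℝ) ^ ((u 0 : ℕ) * (b : ℕ))) * Y 0 b *
            ∑ v' : Fin p → Fin 2,
            ((-1 : ℝ) ^ (∑ k : Fin p, (u k.succ : ℕ) * (v' k : ℕ)))
              * X u * ∏ k : Fin p, Y k.succ (v' k) := by
      intro u
      rw [sum_pi_fin_succ]
      congr 1; ext b
      rw [Finset.mul_sum]
      congr 1; ext v'
      rw [Fin.sum_univ_succ, Fin.prod_univ_succ, pow_add]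
      simp [Fin.cons_succ, Fin.cons_zero]
      ring
    set G : Fin 2 → ℝ := fun a =>
      ∑ u' : Fin p → Fin 2, ∑ v' : Fin p → Fin 2,
        ((-1 : ℝ) ^ (∑ k : Fin p, (u' k : ℕ) * (v' k : ℕ)))
          * X (Fin.cons a u') * ∏ k : Fin p, Y k.succ (v' k) with hG
    have hGbound : ∀ a, |G a| ≤ 2 ^ p := fun a =>
      ih (fun u' => X (Fin.cons a u')) (fun k => Y k.succ) (fun u' => hX _) (fun k j => hY _ _)
    have hmain : ∑ u : Fin (p+1) → Fin 2, ∑ v : Fin (p+1) → Fin 2,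
          ((-1 : ℝ) ^ (∑ k, (u k : ℕ) * (v k : ℕ))) * X u * ∏ k, Y k (v k)
        = (Y 0 0 + Y 0 1) * G 0 + (Y 0 0 - Y 0 1) * G 1 := by
      rw [sum_pi_fin_succ (g := fun u => ∑ v : Fin (p+1) → Fin 2,
          ((-1 : ℝ) ^ (∑ k, (u k : ℕ) * (v k : ℕ))) * X u * ∏ k, Y k (v k))]
      have h0 : ∀ a : Fin 2, ∀ u' : Fin p → Fin 2, (Fin.cons a u' : Fin (p+1) → Fin 2) 0 = a :=
        fun a u' => rfl
      have h1 : ∀ a : Fin 2, ∀ u' : Fin p → Fin 2, ∀ k : Fin p,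
          (Fin.cons a u' : Fin (p+1) → Fin 2) k.succ = u' k := fun a u' k => by simp
      simp only [hrw]
      rw [Fin.sum_univ_two]
      simp only [Fin.sum_univ_two, h0, h1, hG]
      simp only [Fin.val_zero, Fin.val_one, mul_zero, zero_mul, mul_one, one_mul,
        pow_zero, pow_one]
      congr 1 <;> (rw [Finset.mul_sum]; refine Finset.sum_congr rfl fun x _ => by ring)
    rw [hmain]
    calc |(Y 0 0 + Y 0 1) * G 0 + (Y 0 0 - Y 0 1) * G 1|
        ≤ |Y 0 0 + Y 0 1| * |G 0| + |Y 0 0 - Y 0 1| * |G 1| := by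
          refine (abs_add_le _ _).trans ?_
          rw [abs_mul, abs_mul]
      _ ≤ |Y 0 0 + Y 0 1| * 2 ^ p + |Y 0 0 - Y 0 1| * 2 ^ p := by
          gcongr <;> [exact hGbound 0; exact hGbound 1]
      _ = (|Y 0 0 + Y 0 1| + |Y 0 0 - Y 0 1|) * 2 ^ p := by ring
      _ ≤ 2 * 2 ^ p := by
          have := twoabs (hY 0 0) (hY 0 1)
          nlinarith [pow_pos (show (0:ℝ) < 2 by norm_num) p]
      _ = 2 ^ (p+1) := by ring

noncomputable def myJ (M : ℕ) (u v : Fin (M+1) → Fin 2) : Fin (M+2) → Fin (2 ^ (M+1)) :=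
  Fin.cons (finFunctionFinEquiv u)
    (fun k' => Fin.castLE (Nat.pow_le_pow_right (by norm_num) (Nat.le_add_left 1 M)) (v k'))

noncomputable def myT (M : ℕ) :
    MultilinearMap ℝ (fun _ : Fin (M + 2) => (Fin (2 ^ (M+1)) → ℝ)) ℝ :=
  ∑ u : Fin (M+1) → Fin 2, ∑ v : Fin (M+1) → Fin 2,
    ((-1 : ℝ) ^ (∑ k, (u k : ℕ) * (v k : ℕ))) •
      (MultilinearMap.mkPiAlgebra ℝ (Fin (M + 2)) ℝ).compLinearMap
        (fun k => LinearMap.proj (myJ M u v k))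

lemma myT_apply (M : ℕ) (x : Fin (M+2) → Fin (2 ^ (M+1)) → ℝ) :
    myT M x = ∑ u : Fin (M+1) → Fin 2, ∑ v : Fin (M+1) → Fin 2,
      ((-1 : ℝ) ^ (∑ k, (u k : ℕ) * (v k : ℕ))) * ∏ k, x k (myJ M u v k) := by
  simp [myT, MultilinearMap.sum_apply, smul_eq_mul]

lemma myT_bound (M : ℕ) (x : Fin (M+2) → Fin (2 ^ (M+1)) → ℝ)
    (hx : ∀ i j, |x i j| ≤ 1) : |myT M x| ≤ 2 ^ (M+1) := by
  have h := keyF (M+1) (fun u => x 0 (finFunctionFinEquiv u))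
    (fun k j => x k.succ (Fin.castLE (Nat.pow_le_pow_right (by norm_num) (Nat.le_add_left 1 M)) j))
    (fun u => hx _ _) (fun k j => hx _ _)
  rw [myT_apply]
  convert h using 3 with u
  refine Finset.sum_congr rfl fun v _ => ?_
  rw [Fin.prod_univ_succ]
  simp only [myJ, Fin.cons_zero, Fin.cons_succ]
  ring

lemma myT_eval_sq (M : ℕ) (j₁ : Fin (2 ^ (M+1))) (idx : Fin (M+1) → Fin (2 ^ (M+1))) :
    |myT M (fun k => e (2 ^ (M+1)) (Fin.cons (α := fun _ => Fin (2 ^ (M+1))) j₁ idx k))| ^ 2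
      = if ∀ k, (idx k : ℕ) < 2 then 1 else 0 := by
  have hprod : ∀ u v, (∏ k, e (2 ^ (M+1))
      (Fin.cons (α := fun _ => Fin (2 ^ (M+1))) j₁ idx k) (myJ M u v k))
      = if myJ M u v = Fin.cons (α := fun _ => Fin (2 ^ (M+1))) j₁ idx then 1 else 0 := by
    intro u v
    simp only [e]
    rw [Finset.prod_boole]
    congr 1
    simp only [eq_iff_iff]
    constructor
    · intro h; funext k; exact h k (mem_univ k)
    · intro h k _; rw [h]
  rw [myT_apply]
  simp only [hprod]
  by_cases h : ∀ k, (idx k : ℕ) < 2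
  · set u₀ : Fin (M+1) → Fin 2 := finFunctionFinEquiv.symm j₁ with hu₀
    set v₀ : Fin (M+1) → Fin 2 := fun k => ⟨(idx k : ℕ), h k⟩ with hv₀
    have key : ∀ u v, (myJ M u v = Fin.cons (α := fun _ => Fin (2 ^ (M+1))) j₁ idx)
        ↔ (u = u₀ ∧ v = v₀) := by
      intro u v
      constructor
      · intro hj
        have h0 : finFunctionFinEquiv u = j₁ := by
          have := congrFun hj 0; simpa [myJ] using this
        have hs : ∀ k, ((v k : ℕ) : ℕ) = (idx k : ℕ) := by
          intro k
          have := congrFun hj k.succ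
          simp only [myJ, Fin.cons_succ] at this
          exact congrArg Fin.val this
        refine ⟨?_, funext fun k => Fin.ext (hs k)⟩
        rw [hu₀, ← h0, Equiv.symm_apply_apply]
      · rintro ⟨rfl, rfl⟩
        funext k
        refine Fin.cases ?_ ?_ k
        · simp [myJ, hu₀]
        · intro k'; simp only [myJ, Fin.cons_succ]; exact Fin.ext rfl
    have : ∑ u : Fin (M+1) → Fin 2, ∑ v : Fin (M+1) → Fin 2,
        ((-1 : ℝ) ^ (∑ k, (u k : ℕ) * (v k : ℕ))) *
          (if myJ M u v = Fin.cons (α := fun _ => Fin (2 ^ (M+1))) j₁ idx then 1 else 0)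
        = (-1 : ℝ) ^ (∑ k, (u₀ k : ℕ) * (v₀ k : ℕ)) := by
      rw [Finset.sum_eq_single u₀]
      · rw [Finset.sum_eq_single v₀]
        · simp [key]
        · intro v _ hv; simp [key, hv]
        · intro habs; exact absurd (mem_univ v₀) habs
      · intro u _ hu
        apply Finset.sum_eq_zero
        intro v _
        simp [key, hu]
      · intro habs; exact absurd (mem_univ u₀) habs
    rw [this, if_pos h]
    simp [abs_pow]
  · rw [if_neg h]
    push_neg at h
    obtain ⟨k₀, hk₀⟩ := h
    have : ∀ u v, ¬ (myJ M u v = Fin.cons (α := fun _ => Fin (2 ^ (M+1))) j₁ idx) := by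
      intro u v hj
      have := congrFun hj k₀.succ
      simp only [myJ, Fin.cons_succ] at this
      have hval : (idx k₀ : ℕ) < 2 := by
        rw [← this]
        exact (v k₀).isLt
      omega
    simp [this]

lemma inner_count (M : ℕ) :
    (∑ idx : Fin (M+1) → Fin (2^(M+1)),
      (if ∀ k, ((idx k):ℕ) < 2 then (1:ℝ) else 0)) = 2^(M+1) := by
  have hsplit : ∀ idx : Fin (M+1) → Fin (2^(M+1)),
      (if ∀ k, ((idx k):ℕ) < 2 then (1:ℝ) else 0)
        = ∏ k, (if ((idx k):ℕ) < 2 then (1:ℝ) else 0) := by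
    intro idx; rw [Finset.prod_boole]; simp
  simp only [hsplit]
  have h2 : (∑ idx ∈ Fintype.piFinset
        (fun _ : Fin (M+1) => (univ : Finset (Fin (2^(M+1))))),
      ∏ k, (if ((idx k):ℕ) < 2 then (1:ℝ) else 0))
      = ∏ _k : Fin (M+1), ∑ j : Fin (2^(M+1)), (if (j:ℕ) < 2 then (1:ℝ) else 0) :=
    (Finset.prod_univ_sum (fun _ : Fin (M+1) => (univ : Finset (Fin (2^(M+1)))))
      (fun _ j => if (j:ℕ) < 2 then (1:ℝ) else 0)).symm
  rw [Fintype.piFinset_univ] at h2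
  rw [h2]
  have h3 : (∑ j : Fin (2^(M+1)), (if (j:ℕ) < 2 then (1:ℝ) else 0)) = 2 := by
    rw [Fin.sum_univ_eq_sum_range (fun i => if i < 2 then (1:ℝ) else 0)]
    have hle : 2 ≤ 2^(M+1) := by
      have h1 : 1 ≤ 2^M := Nat.one_le_two_pow
      rw [pow_succ]; omega
    rw [← Finset.sum_subset (Finset.range_subset_range.2 hle)
      (fun x _ hx => if_neg (by simpa using hx))]
    rw [Finset.sum_range_succ, Finset.sum_range_one]; norm_num
  rw [h3]
  simp

/-- Lower bound for the mixed `(ℓ₁,ℓ₂)`-Littlewood inequality with exponents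
`(1,2,...,2)`: any `C` with
`Σ_{j₁≤n}(Σ_{j₂,...,j_m≤n}|T(e_{j₁},...,e_{j_m})|²)^{1/2} ≤ C‖T‖`
for all real `m`-linear forms (here `m = M + 2 ≥ 2`) satisfies
`C ≥ 2^{(m-1)/2}`. -/
theorem stmt_9 (M : ℕ) (C : ℝ)
    (hC : ∀ n : ℕ, ∀ T : MultilinearMap ℝ (fun _ : Fin (M + 2) => (Fin n → ℝ)) ℝ,
      ∑ j₁ : Fin n, (∑ idx : Fin (M + 1) → Fin n,
          |T fun k => e n (Fin.cons (α := fun _ => Fin n) j₁ idx k)| ^ 2) ^ ((1:ℝ)/2)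
        ≤ C * supNorm (M + 2) n T) :
    (2:ℝ) ^ (((M : ℝ) + 1) / 2) ≤ C := by
  have hT := hC (2 ^ (M+1)) (myT M)
  set B : ℝ := 2 ^ (M+1) with hB
  have hBpos : (0:ℝ) < B := by positivity
  set R : ℝ := B ^ ((1:ℝ)/2) with hR
  have hRpos : 0 < R := Real.rpow_pos_of_pos hBpos _
  -- compute the left-hand sum
  have hsum : (∑ j₁ : Fin (2 ^ (M+1)), (∑ idx : Fin (M + 1) → Fin (2 ^ (M+1)),
      |myT M fun k => e (2 ^ (M+1))
        (Fin.cons (α := fun _ => Fin (2 ^ (M+1))) j₁ idx k)| ^ 2) ^ ((1:ℝ)/2))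
      = B * R := by
    have hinner : ∀ j₁ : Fin (2 ^ (M+1)), (∑ idx : Fin (M + 1) → Fin (2 ^ (M+1)),
        |myT M fun k => e (2 ^ (M+1))
          (Fin.cons (α := fun _ => Fin (2 ^ (M+1))) j₁ idx k)| ^ 2) = B := by
      intro j₁
      rw [show B = ((2:ℝ)^(M+1)) from hB, ← inner_count M]
      exact Finset.sum_congr rfl fun idx _ => myT_eval_sq M j₁ idx
    simp only [hinner]
    rw [Finset.sum_const, Finset.card_univ, Fintype.card_fin, nsmul_eq_mul, hR, hB]
    push_cast
    ring
  rw [hsum] at hT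
  -- bound the sup norm
  have hub : ∀ w ∈ {v : ℝ | ∃ x : Fin (M+2) → Fin (2 ^ (M+1)) → ℝ,
      (∀ i, ‖x i‖ ≤ 1) ∧ v = |myT M x|}, w ≤ B := by
    rintro w ⟨x, hx, rfl⟩
    refine (myT_bound M x fun i j => ?_)
    calc |x i j| = ‖x i j‖ := (Real.norm_eq_abs _).symm
      _ ≤ ‖x i‖ := norm_le_pi_norm (x i) j
      _ ≤ 1 := hx i
  have hmem : |myT M (fun _ _ => (0:ℝ))| ∈ {v : ℝ | ∃ x : Fin (M+2) → Fin (2 ^ (M+1)) → ℝ,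
      (∀ i, ‖x i‖ ≤ 1) ∧ v = |myT M x|} := ⟨fun _ _ => 0, fun i => by simp [norm_zero], rfl⟩
  have hsup_le : supNorm (M + 2) (2 ^ (M+1)) (myT M) ≤ B :=
    csSup_le ⟨_, hmem⟩ hub
  have hsup_nonneg : 0 ≤ supNorm (M + 2) (2 ^ (M+1)) (myT M) :=
    le_trans (abs_nonneg _) (le_csSup ⟨B, hub⟩ hmem)
  -- conclude
  have hCpos : 0 < C := by
    by_contra hc
    push_neg at hc
    have : C * supNorm (M + 2) (2 ^ (M+1)) (myT M) ≤ 0 :=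
      mul_nonpos_of_nonpos_of_nonneg hc hsup_nonneg
    nlinarith
  have hfin : B * R ≤ C * B :=
    hT.trans (by exact mul_le_mul_of_nonneg_left hsup_le hCpos.le)
  have hRC : R ≤ C := by
    rw [mul_comm B R, mul_comm C B] at hfin
    exact le_of_mul_le_mul_left (by linarith [hfin]) hBpos
  refine le_trans (le_of_eq ?_) hRC
  rw [hR, hB]
  rw [show ((2:ℝ) ^ (M+1) : ℝ) = (2:ℝ) ^ ((M+1 : ℕ) : ℝ) from (Real.rpow_natCast 2 (M+1)).symm,
    ← Real.rpow_mul (by norm_num)]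
  congr 1
  push_cast
  ring
end
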